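/- One-point Nevanlinna–Pick: given ζ₁, w₁ in the open unit disk, an analytic function f : 𝔻 → 𝔻 satisfies f(ζ₁) = w₁ if and only if f(ζ) = (b_{ζ₁}(ζ)·f₁(ζ) + w₁)/(1 + conj(w₁)·b_{ζ₁}(ζ)·f₁(ζ)) for some analytic f₁ : 𝔻 → closure(𝔻). -/

import Mathlib

noncomputable def blaschke (a : ℂ) (ζ : ℂ) : ℂ :=
  if a = 0 then ζ else (((‖a‖ : ℝ) : ℂ) / a) * (a - ζ) / (1 - (starRingEnd ℂ) a * ζ)

open Complex Metric Set Filter Topology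

lemma blaschke_self (a : ℂ) : blaschke a a = 0 := by
  rw [blaschke]; split_ifs with h
  · exact h
  · simp

lemma aux_ne_one {w z : ℂ} (hw : ‖w‖ < 1) (hz : ‖z‖ ≤ 1) :
    (1 : ℂ) - (starRingEnd ℂ) w * z ≠ 0 := by
  intro h
  have h1 : (starRingEnd ℂ) w * z = 1 := by
    have := sub_eq_zero.mp h; exact this.symm
  have h2 : ‖((starRingEnd ℂ) w * z)‖ < 1 := by
    rw [norm_mul, Complex.norm_conj]
    nlinarith [norm_nonneg w, norm_nonneg z]
  rw [h1] at h2; simp at h2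

lemma mobius_lt_one {w z : ℂ} (hw : ‖w‖ < 1) (hz : ‖z‖ < 1) :
    ‖((z - w) / (1 - (starRingEnd ℂ) w * z))‖ < 1 := by
  have hne := aux_ne_one hw hz.le
  have hpos : 0 < ‖(1 - (starRingEnd ℂ) w * z)‖ := norm_pos_iff.mpr hne
  rw [norm_div, div_lt_one hpos]
  have hw2 : Complex.normSq w < 1 := by
    rw [← Complex.sq_norm]; nlinarith [norm_nonneg w]
  have hz2 : Complex.normSq z < 1 := by
    rw [← Complex.sq_norm]; nlinarith [norm_nonneg z]
  have key : Complex.normSq (z - w) < Complex.normSq (1 - (starRingEnd ℂ) w * z) := by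
    simp only [Complex.normSq_apply, Complex.sub_re, Complex.sub_im, Complex.mul_re,
      Complex.mul_im, Complex.one_re, Complex.one_im, Complex.conj_re, Complex.conj_im,
      Complex.normSq_apply] at hw2 hz2 ⊢
    nlinarith [mul_pos (sub_pos.2 hw2) (sub_pos.2 hz2)]
  have h1 : ‖(z - w)‖ ^ 2 < ‖(1 - (starRingEnd ℂ) w * z)‖ ^ 2 := by
    rw [Complex.sq_norm, Complex.sq_norm]; exact key
  exact lt_of_pow_lt_pow_left₀ 2 (norm_nonneg _) h1

lemma abs_blaschke_ge {ζ₁ ζ : ℂ} {r : ℝ} (har : ‖ζ₁‖ < r) (hr1 : r < 1)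
    (hζ : ‖ζ‖ = r) :
    (r - ‖ζ₁‖) / (1 - ‖ζ₁‖ * r) ≤ ‖(blaschke ζ₁ ζ)‖ := by
  set a := ‖ζ₁‖ with ha
  have ha0 : 0 ≤ a := norm_nonneg ζ₁
  have h1ar : 0 < 1 - a * r := by nlinarith
  rcases eq_or_ne ζ₁ 0 with h0 | h0
  · have : a = 0 := by rw [ha, h0]; simp
    rw [blaschke, if_pos h0, hζ, this]
    simp
  · have haR : a ≠ 0 := fun h => h0 (norm_eq_zero.mp (ha ▸ h))
    have hu : ‖((starRingEnd ℂ) ζ₁ * ζ)‖ = a * r := by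
      rw [norm_mul, Complex.norm_conj, hζ]
    have hune : (1 : ℂ) - (starRingEnd ℂ) ζ₁ * ζ ≠ 0 := by
      intro h
      have h1 : (starRingEnd ℂ) ζ₁ * ζ = 1 := (sub_eq_zero.mp h).symm
      rw [h1] at hu; simp at hu; nlinarith
    have hupos : 0 < ‖(1 - (starRingEnd ℂ) ζ₁ * ζ)‖ := norm_pos_iff.mpr hune
    have habs : ‖(blaschke ζ₁ ζ)‖ =
        ‖(ζ₁ - ζ)‖ / ‖(1 - (starRingEnd ℂ) ζ₁ * ζ)‖ := by
      rw [blaschke, if_neg h0, norm_div, norm_mul, norm_div, Complex.norm_real,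
        Real.norm_of_nonneg ha0, div_self haR, one_mul]
    rw [habs, div_le_div_iff₀ h1ar hupos]
    set X := ‖(ζ₁ - ζ)‖ with hX
    set Y := ‖(1 - (starRingEnd ℂ) ζ₁ * ζ)‖ with hY
    set s := (ζ₁ * (starRingEnd ℂ) ζ).re with hs
    have hX2 : X ^ 2 = a ^ 2 + r ^ 2 - 2 * s := by
      rw [hX, Complex.sq_norm, Complex.normSq_sub, ← Complex.sq_norm, ← Complex.sq_norm, hζ, ← ha, hs]
    have hY2 : Y ^ 2 = 1 + a ^ 2 * r ^ 2 - 2 * s := by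
      rw [hY, Complex.sq_norm, Complex.normSq_sub, Complex.normSq_one, ← Complex.sq_norm, hu]
      have : (1 * (starRingEnd ℂ) ((starRingEnd ℂ) ζ₁ * ζ)).re = s := by
        rw [one_mul, map_mul, Complex.conj_conj, hs]
      rw [this]; ring
    have hsar : s ≤ a * r := by
      have := Complex.re_le_norm (ζ₁ * (starRingEnd ℂ) ζ)
      rwa [norm_mul, Complex.norm_conj, hζ, ← ha, ← hs] at this
    have hXpos : 0 ≤ X := norm_nonneg _
    have hYpos : 0 ≤ Y := norm_nonneg _
    have key : ((r - a) * Y) ^ 2 ≤ ((1 - a * r) * X) ^ 2 := by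
      have hint : 0 ≤ (a * r - s) * ((1 - a ^ 2) * (1 - r ^ 2)) := by
        apply mul_nonneg (by linarith)
        apply mul_nonneg <;> nlinarith
      nlinarith [hX2, hY2]
    have h2 : (r - a) * Y ≤ (1 - a * r) * X := by
      have hrhs : 0 ≤ (1 - a * r) * X := mul_nonneg h1ar.le hXpos
      exact le_of_pow_le_pow_left₀ two_ne_zero hrhs key
    nlinarith [h2]

theorem one_point_nevanlinna_pick (ζ₁ w₁ : ℂ)
    (hζ₁ : ‖ζ₁‖ < 1) (hw₁ : ‖w₁‖ < 1)
    (f : ℂ → ℂ)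
    (hf : DifferentiableOn ℂ f {ζ : ℂ | ‖ζ‖ < 1})
    (hmap : ∀ ζ ∈ {ζ : ℂ | ‖ζ‖ < 1}, ‖f ζ‖ < 1) :
    f ζ₁ = w₁ ↔
      ∃ f₁ : ℂ → ℂ, DifferentiableOn ℂ f₁ {ζ : ℂ | ‖ζ‖ < 1} ∧
        (∀ ζ ∈ {ζ : ℂ | ‖ζ‖ < 1}, ‖f₁ ζ‖ ≤ 1) ∧
        (∀ ζ ∈ {ζ : ℂ | ‖ζ‖ < 1},
          f ζ = (blaschke ζ₁ ζ * f₁ ζ + w₁) /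
            (1 + (starRingEnd ℂ) w₁ * blaschke ζ₁ ζ * f₁ ζ)) := by
  have hD : IsOpen {ζ : ℂ | ‖ζ‖ < 1} :=
    isOpen_lt continuous_norm continuous_const
  constructor
  · intro hfζ
    set D := {ζ : ℂ | ‖ζ‖ < 1} with hDdef
    set g : ℂ → ℂ := fun ζ => (f ζ - w₁) / (1 - (starRingEnd ℂ) w₁ * f ζ) with hg
    have hgden : ∀ ζ ∈ D, (1 : ℂ) - (starRingEnd ℂ) w₁ * f ζ ≠ 0 :=
      fun ζ hζ => aux_ne_one hw₁ (hmap ζ hζ).le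
    have hgd : DifferentiableOn ℂ g D :=
      DifferentiableOn.div (hf.sub (differentiableOn_const _))
        ((differentiableOn_const _).sub ((differentiableOn_const _).mul hf)) hgden
    have hg1 : ∀ ζ ∈ D, ‖(g ζ)‖ < 1 :=
      fun ζ hζ => mobius_lt_one hw₁ (hmap ζ hζ)
    have hg0 : g ζ₁ = 0 := by simp [hg, hfζ]
    set c : ℂ := if ζ₁ = 0 then 1 else -(ζ₁ / (‖ζ₁‖ : ℂ)) with hc
    have hbc : ∀ ζ : ℂ, ‖ζ‖ < 1 →
        blaschke ζ₁ ζ * (c * (1 - (starRingEnd ℂ) ζ₁ * ζ)) = ζ - ζ₁ := by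
      intro ζ hζ
      rcases eq_or_ne ζ₁ 0 with h0 | h0
      · simp [blaschke, hc, h0]
      · have hne : (1 : ℂ) - (starRingEnd ℂ) ζ₁ * ζ ≠ 0 := aux_ne_one hζ₁ hζ.le
        have haζ : (‖ζ₁‖ : ℂ) ≠ 0 := by
          simp only [ne_eq, Complex.ofReal_eq_zero]
          exact norm_ne_zero_iff.mpr h0
        rw [blaschke, if_neg h0, hc, if_neg h0]
        have hne' : (1 : ℂ) - ζ * (starRingEnd ℂ) ζ₁ ≠ 0 := by rwa [mul_comm ζ]
        field_simp
        ring
    set f₁ : ℂ → ℂ := fun ζ => dslope g ζ₁ ζ * (c * (1 - (starRingEnd ℂ) ζ₁ * ζ)) with hf₁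
    have hpoly : DifferentiableOn ℂ (fun ζ : ℂ => c * (1 - (starRingEnd ℂ) ζ₁ * ζ)) D :=
      ((differentiable_const c).mul ((differentiable_const 1).sub
        ((differentiable_const _).mul differentiable_id))).differentiableOn
    have hf₁d : DifferentiableOn ℂ f₁ D :=
      ((Complex.differentiableOn_dslope (hD.mem_nhds hζ₁)).mpr hgd).mul hpoly
    have hkey : ∀ ζ ∈ D, blaschke ζ₁ ζ * f₁ ζ = g ζ := by
      intro ζ hζ
      rcases eq_or_ne ζ ζ₁ with rfl | hne
      · simp [hf₁, blaschke_self, hg0]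
      · have hζD : ‖ζ‖ < 1 := hζ
        rw [hf₁]
        simp only
        rw [dslope_of_ne g hne, slope_def_field, hg0, sub_zero]
        have hsub : ζ - ζ₁ ≠ 0 := sub_ne_zero.mpr hne
        field_simp
        linear_combination g ζ * (hbc ζ hζD)
    have hform : ∀ ζ ∈ D, f ζ = (g ζ + w₁) / (1 + (starRingEnd ℂ) w₁ * g ζ) := by
      intro ζ hζ
      have h1 := hgden ζ hζ
      have h2 : (1 : ℂ) + (starRingEnd ℂ) w₁ * g ζ ≠ 0 := by
        intro h
        have h3 : (starRingEnd ℂ) w₁ * g ζ = -1 := by linear_combination h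
        have h4 : ‖((starRingEnd ℂ) w₁ * g ζ)‖ < 1 := by
          rw [norm_mul, Complex.norm_conj]
          nlinarith [norm_nonneg w₁, norm_nonneg (g ζ), hg1 ζ hζ]
        rw [h3] at h4; simp at h4
      rw [eq_div_iff h2, hg]
      simp only
      have h1' : (1 : ℂ) - f ζ * (starRingEnd ℂ) w₁ ≠ 0 := by rwa [mul_comm (f ζ)]
      field_simp
      ring
    refine ⟨f₁, hf₁d, ?_, ?_⟩
    · intro ζ₀ hζ₀
      have hζ₀' : ‖ζ₀‖ < 1 := hζ₀
      set a := ‖ζ₁‖ with ha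
      have ha0 : 0 ≤ a := norm_nonneg ζ₁
      have hstep : ∀ r : ℝ, max (‖ζ₀‖) a < r → r < 1 →
          ‖(f₁ ζ₀)‖ ≤ (1 - a * r) / (r - a) := by
        intro r hmr hr1
        have har : a < r := lt_of_le_of_lt (le_max_right _ _) hmr
        have hz0r : ‖ζ₀‖ < r := lt_of_le_of_lt (le_max_left _ _) hmr
        have hr0 : 0 < r := lt_of_le_of_lt ha0 har
        have h1ar : 0 < 1 - a * r := by nlinarith
        have hsub : closedBall (0 : ℂ) r ⊆ D := by
          intro z hz
          rw [mem_closedBall, Complex.dist_eq, sub_zero] at hz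
          exact lt_of_le_of_lt hz hr1
        have hdcc : DiffContOnCl ℂ f₁ (ball (0 : ℂ) r) := by
          apply DifferentiableOn.diffContOnCl
          rw [closure_ball (0 : ℂ) hr0.ne']
          exact hf₁d.mono hsub
        have hmem : ζ₀ ∈ closure (ball (0 : ℂ) r) := by
          apply subset_closure
          rw [mem_ball, Complex.dist_eq, sub_zero]
          exact hz0r
        have := Complex.norm_le_of_forall_mem_frontier_norm_le isBounded_ball hdcc
          (C := (1 - a * r) / (r - a)) ?_ hmem
        · exact this
        · intro z hz
          rw [frontier_ball (0 : ℂ) hr0.ne'] at hz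
          have hzr : ‖z‖ = r := by
            rw [mem_sphere_iff_norm, sub_zero] at hz
            exact hz
          have hzD : z ∈ D := by
            show ‖z‖ < 1
            rw [hzr]; exact hr1
          have hb := abs_blaschke_ge har hr1 hzr
          have hbpos : 0 < ‖(blaschke ζ₁ z)‖ :=
            lt_of_lt_of_le (div_pos (by linarith) h1ar) hb
          have h1 : ‖(blaschke ζ₁ z)‖ * ‖(f₁ z)‖ ≤ 1 := by
            rw [← norm_mul, hkey z hzD]
            exact (hg1 z hzD).le
          show ‖(f₁ z)‖ ≤ (1 - a * r) / (r - a)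
          rw [le_div_iff₀ (by linarith : (0:ℝ) < r - a)]
          rw [div_le_iff₀ h1ar] at hb
          nlinarith [norm_nonneg (f₁ z)]
      have hane : (1 : ℝ) - a ≠ 0 := by
        have : a < 1 := hζ₁
        linarith
      have hcont : ContinuousAt (fun r : ℝ => (1 - a * r) / (r - a)) 1 := by
        apply ContinuousAt.div (by fun_prop) (by fun_prop)
        simpa using hane
      have hlim : Tendsto (fun r : ℝ => (1 - a * r) / (r - a)) (𝓝[<] (1 : ℝ)) (𝓝 1) := by
        have h2 : Tendsto (fun r : ℝ => (1 - a * r) / (r - a)) (𝓝[<] (1 : ℝ))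
            (𝓝 ((1 - a * 1) / ((1 : ℝ) - a))) :=
          hcont.tendsto.mono_left nhdsWithin_le_nhds
        have h3 : (1 - a * 1) / ((1 : ℝ) - a) = 1 := by
          rw [mul_one, div_self hane]
        rwa [h3] at h2
      refine ge_of_tendsto hlim ?_
      have hmax1 : max (‖ζ₀‖) a < 1 := max_lt hζ₀' hζ₁
      filter_upwards [Ioo_mem_nhdsLT hmax1] with r hr
      exact hstep r hr.1 hr.2
    · intro ζ hζ
      rw [mul_assoc, hkey ζ hζ]
      exact hform ζ hζ
  · rintro ⟨f₁, hd, hb, heq⟩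
    have h := heq ζ₁ hζ₁
    rw [blaschke_self] at h
    simpa using h
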